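/- If $a$ lies in the convex hull of $\{z_1,\dots,z_n\}$, i.e. $\sum_{i=1}^n t_i(a-z_i)=0$ for some $t_i\ge0$ with $\sum_i t_i=1$, and $a\ne z_i$ for all $i$, then taking $\gamma_i = t_i|a-z_i|^2 / \sum_j t_j|a-z_j|^2$ gives nonnegative weights summing to $1$ for which $A_n^\gamma(a)=0$. -/

import Mathlib

open Polynomial Finset

theorem explicit_weights_for_point_in_convexHull
    (n : ℕ) (hn : 1 ≤ n) (z : ℕ → ℂ) (t : ℕ → ℝ) (a : ℂ)
    (ht0 : ∀ i ∈ Finset.range n, 0 ≤ t i)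
    (ht1 : ∑ i ∈ Finset.range n, t i = 1)
    (ha : ∑ i ∈ Finset.range n, (t i : ℂ) * (a - z i) = 0)
    (haz : ∀ i ∈ Finset.range n, a ≠ z i) :
    let γ : ℕ → ℝ := fun i =>
      t i * ‖a - z i‖ ^ 2 /
        (∑ j ∈ Finset.range n, t j * ‖a - z j‖ ^ 2)
    (∀ i ∈ Finset.range n, 0 ≤ γ i) ∧
    (∑ i ∈ Finset.range n, γ i = 1) ∧
    (∑ k ∈ Finset.range n, C ((γ k : ℂ)) *
      ∏ j ∈ (Finset.range n).erase k, (X - C (z j))).IsRoot a := by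
  intro γ
  set S : ℝ := ∑ j ∈ Finset.range n, t j * ‖a - z j‖ ^ 2 with hS
  have hterm : ∀ j ∈ Finset.range n, 0 ≤ t j * ‖a - z j‖ ^ 2 := by
    intro j hj
    exact mul_nonneg (ht0 j hj) (by positivity)
  have hSpos : 0 < S := by
    have hex : ∃ i ∈ Finset.range n, 0 < t i * ‖a - z i‖ ^ 2 := by
      by_contra h
      push_neg at h
      have : ∀ i ∈ Finset.range n, t i = 0 := by
        intro i hi
        have h1 := h i hi
        have h2 : 0 < ‖a - z i‖ ^ 2 := by
          exact pow_pos (norm_pos_iff.mpr (sub_ne_zero.mpr (haz i hi))) 2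
        nlinarith [ht0 i hi, mul_nonneg (ht0 i hi) h2.le]
      have : (1 : ℝ) = 0 := by
        rw [← ht1]; exact Finset.sum_eq_zero this
      norm_num at this
    obtain ⟨i, hi, hpos⟩ := hex
    exact Finset.sum_pos' hterm ⟨i, hi, hpos⟩
  have hSne : (S : ℂ) ≠ 0 := by exact_mod_cast hSpos.ne'
  refine ⟨fun i hi => div_nonneg (hterm i hi) hSpos.le, ?_, ?_⟩
  · rw [← Finset.sum_div, ← hS, div_self hSpos.ne']
  · unfold IsRoot
    rw [eval_finset_sum]
    have key : ∀ k ∈ Finset.range n,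
        eval a (C ((γ k : ℂ)) * ∏ j ∈ (Finset.range n).erase k, (X - C (z j)))
        = (t k : ℂ) * (starRingEnd ℂ) (a - z k) / S
            * ∏ j ∈ Finset.range n, (a - z j) := by
      intro k hk
      rw [eval_mul, eval_C, eval_prod]
      simp only [eval_sub, eval_X, eval_C]
      have habs : ((‖a - z k‖ : ℝ) : ℂ) ^ 2
          = (a - z k) * (starRingEnd ℂ) (a - z k) := by
        rw [Complex.mul_conj, ← Complex.sq_norm]
        push_cast
        ring
      have hprod : (a - z k) * ∏ j ∈ (Finset.range n).erase k, (a - z j)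
          = ∏ j ∈ Finset.range n, (a - z j) := Finset.mul_prod_erase (Finset.range n) (fun j => a - z j) hk
      have : ((γ k : ℝ) : ℂ) = (t k : ℂ) * ((a - z k) * (starRingEnd ℂ) (a - z k)) / S := by
        simp only [γ]
        rw [hS]
        push_cast
        rw [← habs]
      rw [this, ← hprod]
      ring
    rw [Finset.sum_congr rfl key, ← Finset.sum_mul, ← Finset.sum_div]
    have : ∑ k ∈ Finset.range n, (t k : ℂ) * (starRingEnd ℂ) (a - z k)
        = (starRingEnd ℂ) (∑ k ∈ Finset.range n, (t k : ℂ) * (a - z k)) := by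
      rw [map_sum]
      refine Finset.sum_congr rfl fun k hk => ?_
      rw [map_mul, Complex.conj_ofReal]
    rw [this, ha, map_zero, zero_div, zero_mul]
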